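/- arXiv:1810.09423 — 3 statements merged into one kernel-verified Lean document; each statement's English description precedes it below -/
import Mathlib

section
/- Let f ∈ K[[x₁,...,xₙ]] have finite Milnor number μ. Then the image of the map Der(R)^(2) → R, v ↦ v(f), contains 𝓜^{μ+2}. -/
/-- Formal partial derivative `∂ᵢ` of a multivariate formal power series. -/
noncomputable def mvPderiv {n : ℕ} {K : Type*} [CommRing K] (i : Fin n)
    (f : MvPowerSeries (Fin n) K) : MvPowerSeries (Fin n) K :=
  fun m => ((m i + 1 : ℕ) : K) * MvPowerSeries.coeff (R := K) (m + Finsupp.single i 1) f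

/-- Any submodule of a finite-dimensional quotient is finitely generated. -/
lemma fgAux (K R : Type*) [Field K] [CommRing R] [Algebra K R] (J : Ideal R)
    [FiniteDimensional K (R ⧸ J)] (N : Submodule R (R ⧸ J)) : N.FG := by
  have h1 : (N.restrictScalars K).FG := by
    rw [← Submodule.fg_top]
    exact Module.Finite.fg_top (R := K)
  obtain ⟨s, hs⟩ := h1
  refine ⟨s, le_antisymm (Submodule.span_le.2 ?_) fun x hx => ?_⟩
  · intro x hx
    have : x ∈ Submodule.span K (s : Set (R ⧸ J)) := Submodule.subset_span hx
    rw [hs] at this; exact this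
  · have : x ∈ Submodule.span K (s : Set (R ⧸ J)) := by rw [hs]; exact hx
    exact Submodule.span_le_restrictScalars K R _ this

/-- If `R ⧸ J` has dimension `μ` over `K` then `𝓜 ^ μ ≤ J` for the maximal ideal `𝓜`
of a local `K`-algebra `R`. -/
lemma maxPowAux (K R : Type*) [Field K] [CommRing R] [Algebra K R] [IsLocalRing R]
    (J : Ideal R) [FiniteDimensional K (R ⧸ J)] :
    (IsLocalRing.maximalIdeal R) ^ (Module.finrank K (R ⧸ J)) ≤ J := by
  set 𝓜 := IsLocalRing.maximalIdeal R with h𝓜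
  set μ := Module.finrank K (R ⧸ J) with hμ
  set V : ℕ → Submodule R (R ⧸ J) := fun k => Submodule.map J.mkQ (𝓜 ^ k : Ideal R) with hV
  have hstep : ∀ k, V (k + 1) = 𝓜 • V k := by
    intro k
    show Submodule.map J.mkQ ((𝓜 ^ (k+1) : Ideal R) : Submodule R R) = _
    rw [pow_succ', ← Ideal.smul_eq_mul, Submodule.map_smul'']
  have hle : ∀ k, V (k + 1) ≤ V k := by
    intro k; rw [hstep]; exact Submodule.smul_le_right
  have hjac : 𝓜 ≤ Ideal.jacobson (⊥ : Ideal R) := by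
    rw [IsLocalRing.jacobson_eq_maximalIdeal ⊥ bot_ne_top]
  have key : ∀ k, V k = ⊥ ∨ Module.finrank K ((V k).restrictScalars K) + k ≤ μ := by
    intro k
    induction k with
    | zero => exact Or.inr (by simpa using Submodule.finrank_le ((V 0).restrictScalars K))
    | succ k ih =>
      rcases ih with hbot | h
      · left; rw [hstep, hbot, Submodule.smul_bot]
      · by_cases heq : V (k + 1) = V k
        · left
          rw [heq]
          exact Submodule.eq_bot_of_le_smul_of_le_jacobson_bot 𝓜 (V k) (fgAux K R J _)
            (by rw [← hstep, heq]) hjac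
        · right
          have hlt : (V (k+1)).restrictScalars K < (V k).restrictScalars K := by
            refine lt_of_le_of_ne (fun x hx => hle k hx) fun hcon => heq ?_
            exact Submodule.restrictScalars_injective K R _ hcon
          have := Submodule.finrank_lt_finrank_of_lt hlt
          omega
  have hbot : V μ = ⊥ := by
    rcases key μ with hbot | h
    · exact hbot
    · have : Module.finrank K ((V μ).restrictScalars K) = 0 := by omega
      have h2 : (V μ).restrictScalars K = ⊥ := Submodule.finrank_eq_zero.mp this
      exact Submodule.restrictScalars_injective K R _ (by simpa using h2)
  intro x hx
  have hmem : J.mkQ x ∈ V μ := Submodule.mem_map_of_mem hx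
  rw [hbot, Submodule.mem_bot] at hmem
  rwa [Submodule.mkQ_apply, Submodule.Quotient.mk_eq_zero] at hmem

/-- if `f` has finite Milnor number `μ` then every `g ∈ 𝓜^{μ+2}` is of
the form `v(f)` for a derivation `v = Σ aᵢ∂ᵢ` with coefficients `aᵢ ∈ 𝓜²`. -/
theorem image_of_order_two_derivations_contains
    (K : Type*) [Field K] [CharZero K] (n : ℕ) (f : MvPowerSeries (Fin n) K)
    (Jf : Ideal (MvPowerSeries (Fin n) K))
    (hJf : Jf = Ideal.span (Set.range fun i => mvPderiv i f))
    (𝓜 : Ideal (MvPowerSeries (Fin n) K))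
    (h𝓜 : 𝓜 = RingHom.ker (MvPowerSeries.constantCoeff (σ := Fin n) (R := K)))
    [FiniteDimensional K (MvPowerSeries (Fin n) K ⧸ Jf)]
    (μ : ℕ) (hμ : μ = Module.finrank K (MvPowerSeries (Fin n) K ⧸ Jf)) :
    ∀ g ∈ 𝓜 ^ (μ + 2), ∃ a : Fin n → MvPowerSeries (Fin n) K,
      (∀ i, a i ∈ 𝓜 ^ 2) ∧ ∑ i, a i * mvPderiv i f = g := by
  intro g hg
  have hmax : 𝓜 = IsLocalRing.maximalIdeal (MvPowerSeries (Fin n) K) := by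
    ext x
    rw [h𝓜, RingHom.mem_ker, IsLocalRing.mem_maximalIdeal, mem_nonunits_iff,
      MvPowerSeries.isUnit_iff_constantCoeff, isUnit_iff_ne_zero, not_ne_iff]
  have hpow : 𝓜 ^ μ ≤ Jf := by rw [hmax, hμ]; exact maxPowAux K _ Jf
  have hg2 : g ∈ 𝓜 ^ 2 * Jf := by
    have : 𝓜 ^ (μ + 2) = 𝓜 ^ 2 * 𝓜 ^ μ := by rw [← pow_add]; ring_nf
    rw [this] at hg
    exact Ideal.mul_mono_right hpow hg
  refine Submodule.mul_induction_on hg2 ?_ ?_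
  · intro r hr m hm
    rw [hJf] at hm
    obtain ⟨c, hc⟩ := (Submodule.mem_span_range_iff_exists_fun _).mp hm
    refine ⟨fun i => r * c i, fun i => Ideal.mul_mem_right _ _ hr, ?_⟩
    simp_rw [mul_assoc]
    rw [← Finset.mul_sum]
    simp only [smul_eq_mul] at hc
    rw [hc]
  · rintro x y ⟨a, ha, hax⟩ ⟨b, hb, hbx⟩
    refine ⟨fun i => a i + b i, fun i => Ideal.add_mem _ (ha i) (hb i), ?_⟩
    simp_rw [add_mul]
    rw [Finset.sum_add_distrib, hax, hbx]
end

section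
/- Let λ ∈ ℂⁿ lie in the Poincaré domain, i.e. 0 is not in the convex hull of {λ₁,...,λₙ}. Then for each i ∈ {1,...,n}: (a) the set of nonzero values {|⟨λ,I⟩ − λᵢ| : I ∈ ℕⁿ, ⟨λ,I⟩ ≠ λᵢ} is bounded below by a positive constant, and (b) the set {I ∈ ℕⁿ : ⟨λ,I⟩ = λᵢ} is finite. -/
/-- if `λ ∈ ℂⁿ` lies in the Poincaré domain (`0` not in the convex
hull of its components), then for each `i` the nonzero values `|⟨λ,I⟩ − λᵢ|`,
`I ∈ ℕⁿ`, are bounded below by a positive constant, and the set of resonances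
`{I : ⟨λ,I⟩ = λᵢ}` is finite. -/
theorem poincare_domain_small_divisors
    (n : ℕ) (lam : Fin n → ℂ)
    (h : (0 : ℂ) ∉ convexHull ℝ (Set.range lam)) :
    ∀ i : Fin n,
      (∃ c > 0, ∀ I : Fin n → ℕ,
        (∑ j, (I j : ℂ) * lam j) ≠ lam i →
          c ≤ ‖(∑ j, (I j : ℂ) * lam j) - lam i‖) ∧
      Set.Finite {I : Fin n → ℕ | (∑ j, (I j : ℂ) * lam j) = lam i} := by
  intro i
  have hfin : (Set.range lam).Finite := Set.finite_range lam
  have hcl : IsClosed (convexHull ℝ (Set.range lam)) :=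
    (hfin.isCompact_convexHull ℝ).isClosed
  obtain ⟨f, u, hfu, hub⟩ :=
    geometric_hahn_banach_point_closed (convex_convexHull ℝ _) hcl h
  have hu0 : 0 < u := by simpa using hfu
  have hlam : ∀ j, u < f (lam j) := fun j =>
    hub _ (subset_convexHull ℝ _ ⟨j, rfl⟩)
  -- f of the weighted sum
  have fsum : ∀ I : Fin n → ℕ,
      f (∑ j, (I j : ℂ) * lam j) = ∑ j, (I j : ℝ) * f (lam j) := by
    intro I
    rw [map_sum]
    refine Finset.sum_congr rfl fun j _ => ?_
    rw [show ((I j : ℂ) * lam j) = (I j : ℝ) • lam j by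
      simp [Complex.real_smul], map_smul]
    simp
  have hterm : ∀ (I : Fin n → ℕ) (j : Fin n),
      (I j : ℝ) * u ≤ ∑ k, (I k : ℝ) * f (lam k) := by
    intro I j
    calc (I j : ℝ) * u ≤ (I j : ℝ) * f (lam j) :=
          mul_le_mul_of_nonneg_left (hlam j).le (Nat.cast_nonneg _)
      _ ≤ ∑ k, (I k : ℝ) * f (lam k) :=
          Finset.single_le_sum (f := fun k => (I k : ℝ) * f (lam k))
            (fun k _ => mul_nonneg (Nat.cast_nonneg _) (hu0.trans (hlam k)).le)
            (Finset.mem_univ j)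
  set M : ℝ := f (lam i) with hM
  set N : ℕ := ⌈M / u⌉₊ + 1 with hN
  have hT : {I : Fin n → ℕ | ∀ j, I j ≤ N}.Finite := by
    refine Set.Finite.subset (Set.Finite.pi fun _ : Fin n => Set.finite_Iic N) ?_
    intro I hI j _
    exact hI j
  -- key bound if some coordinate exceeds N
  have hbig : ∀ I : Fin n → ℕ, (¬ ∀ j, I j ≤ N) →
      M + u < f (∑ j, (I j : ℂ) * lam j) := by
    intro I hI
    push_neg at hI
    obtain ⟨j, hj⟩ := hI
    have h1 : (N : ℝ) + 1 ≤ (I j : ℝ) := by exact_mod_cast hj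
    have h2 : M / u + 2 ≤ (I j : ℝ) := by
      have := Nat.le_ceil (M / u)
      rw [hN] at h1
      push_cast at h1 ⊢
      linarith
    have h3 : M + 2 * u ≤ (I j : ℝ) * u := by
      have := mul_le_mul_of_nonneg_right h2 hu0.le
      rw [add_mul, div_mul_cancel₀ _ (ne_of_gt hu0)] at this
      linarith
    rw [fsum]
    have := hterm I j
    linarith
  -- finiteness of resonances
  have hres : {I : Fin n → ℕ | (∑ j, (I j : ℂ) * lam j) = lam i}.Finite := by
    refine hT.subset fun I hI => ?_
    by_contra hc
    have := hbig I hc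
    rw [Set.mem_setOf_eq] at hI
    rw [hI] at this
    linarith
  refine ⟨?_, hres⟩
  -- norm of f is positive
  have hf0 : f ≠ 0 := by
    intro hf
    have := hlam i
    rw [hf] at this
    simp at this
    linarith
  have hfn : 0 < ‖f‖ := norm_pos_iff.mpr hf0
  -- candidate finite set of values
  classical
  set v : (Fin n → ℕ) → ℝ :=
    fun I => ‖(∑ j, (I j : ℂ) * lam j) - lam i‖ with hv
  set F : Finset ℝ :=
    insert (u / ‖f‖)
      ((hT.toFinset.filter
        (fun I => (∑ j, (I j : ℂ) * lam j) ≠ lam i)).image v) with hF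
  have hFne : F.Nonempty := ⟨u / ‖f‖, Finset.mem_insert_self _ _⟩
  refine ⟨F.min' hFne, ?_, ?_⟩
  · rw [gt_iff_lt, Finset.lt_min'_iff]
    intro y hy
    rw [hF, Finset.mem_insert] at hy
    rcases hy with rfl | hy
    · exact div_pos hu0 hfn
    · obtain ⟨I, hIm, rfl⟩ := Finset.mem_image.mp hy
      rw [Finset.mem_filter] at hIm
      have : (∑ j, (I j : ℂ) * lam j) - lam i ≠ 0 := sub_ne_zero.mpr hIm.2
      simpa [hv] using (norm_pos_iff.mpr this)
  · intro I hI
    by_cases hIT : ∀ j, I j ≤ N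
    · apply Finset.min'_le
      rw [hF]
      refine Finset.mem_insert_of_mem (Finset.mem_image.mpr ⟨I, ?_, rfl⟩)
      rw [Finset.mem_filter, Set.Finite.mem_toFinset]
      exact ⟨hIT, hI⟩
    · have h1 : u < f ((∑ j, (I j : ℂ) * lam j) - lam i) := by
        rw [map_sub]
        have := hbig I hIT
        linarith
      have h2 : f ((∑ j, (I j : ℂ) * lam j) - lam i)
          ≤ ‖f‖ * ‖(∑ j, (I j : ℂ) * lam j) - lam i‖ :=
        (le_abs_self _).trans (f.le_opNorm _)
      have h3 : u / ‖f‖ ≤ ‖(∑ j, (I j : ℂ) * lam j) - lam i‖ := by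
        rw [div_le_iff₀ hfn] at *
        nlinarith [norm_nonneg ((∑ j, (I j : ℂ) * lam j) - lam i)]
      exact le_trans (Finset.min'_le F _ (Finset.mem_insert_self _ _)) h3
end

section
/- Weierstrass division in formal power series: let R' = K[[x₁,...,x_{n−1}]] and R = R'[[y]], and let g ∈ R'[y] be a Weierstrass polynomial of degree d, i.e. g = y^d + a₁y^{d−1} + ... + a_d with aᵢ ∈ R' and aᵢ(0) = 0. Then for every f ∈ R there exist unique q ∈ R and r ∈ R'[y] with deg_y(r) < d such that f = q·g + r. In particular R/(g) is a free R'-module with basis the classes of 1, y, ..., y^{d−1}. -/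
open Finset PowerSeries

namespace WDiv

variable {K : Type*} [Field K] {m : ℕ}

lemma degree_add' (a b : Fin m →₀ ℕ) : (a + b).degree = a.degree + b.degree := by
  show (a + b).sum (fun _ c => c) = a.sum (fun _ c => c) + b.sum (fun _ c => c)
  exact Finsupp.sum_add_index' (fun _ => rfl) (fun _ _ _ => rfl)

lemma step1 (P : Polynomial (MvPowerSeries (Fin m) K)) (d : ℕ)
    (hPtop : ∀ j, d ≤ j → P.coeff j = 0)
    (u : PowerSeries (MvPowerSeries (Fin m) K)) (n : ℕ) :
    PowerSeries.coeff (n + d) (u * (P : PowerSeries (MvPowerSeries (Fin m) K))) =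
      ∑ j ∈ Finset.range d, P.coeff j * PowerSeries.coeff (n + d - j) u := by
  rw [PowerSeries.coeff_mul, ← Finset.HasAntidiagonal.map_swap_antidiagonal, Finset.sum_map,
    Finset.Nat.sum_antidiagonal_eq_sum_range_succ_mk]
  simp only [Function.Embedding.coeFn_mk, Prod.swap_prod_mk]
  rw [← Finset.sum_subset (Finset.range_subset_range.mpr (by omega : d ≤ (n + d).succ))]
  · exact Finset.sum_congr rfl fun j hj => by rw [Polynomial.coeff_coe, mul_comm]
  · intro j _ hj
    simp only [Finset.mem_range, not_lt] at hj
    rw [Polynomial.coeff_coe, hPtop j (by omega), mul_zero]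

lemma step2 (P : Polynomial (MvPowerSeries (Fin m) K)) (d : ℕ)
    (hPtop : ∀ j, d ≤ j → P.coeff j = 0)
    (u : PowerSeries (MvPowerSeries (Fin m) K)) (n : ℕ) (e : Fin m →₀ ℕ) :
    MvPowerSeries.coeff e (PowerSeries.coeff (n + d)
        (u * (P : PowerSeries (MvPowerSeries (Fin m) K)))) =
      ∑ j ∈ Finset.range d, ∑ p ∈ Finset.HasAntidiagonal.antidiagonal e,
        MvPowerSeries.coeff p.1 (P.coeff j) *
          MvPowerSeries.coeff p.2 (PowerSeries.coeff (n + d - j) u) := by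
  rw [step1 P d hPtop u n, map_sum]
  exact Finset.sum_congr rfl fun j _ => MvPowerSeries.coeff_mul e _ _

/-- Uniqueness core: if u_n = (u·P)_{n+d} for all n, then u = 0. -/
lemma uniq_core (P : Polynomial (MvPowerSeries (Fin m) K)) (d : ℕ)
    (hP0 : ∀ j < d, MvPowerSeries.constantCoeff (P.coeff j) = 0)
    (hPtop : ∀ j, d ≤ j → P.coeff j = 0)
    (u : PowerSeries (MvPowerSeries (Fin m) K))
    (H : ∀ n, PowerSeries.coeff n u =
      PowerSeries.coeff (n + d) (u * (P : PowerSeries (MvPowerSeries (Fin m) K)))) :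
    u = 0 := by
  have key : ∀ N : ℕ, ∀ e : Fin m →₀ ℕ, e.degree = N → ∀ n : ℕ,
      MvPowerSeries.coeff e (PowerSeries.coeff n u) = 0 := by
    intro N
    induction N using Nat.strong_induction_on with
    | _ N ih =>
      intro e hN n
      rw [H n, step2 P d hPtop u n e]
      refine Finset.sum_eq_zero fun j hj => Finset.sum_eq_zero fun p hp => ?_
      rcases eq_or_ne p.1 0 with h | h
      · rw [h]
        have : MvPowerSeries.coeff (0 : Fin m →₀ ℕ) (P.coeff j) = 0 :=
          hP0 j (Finset.mem_range.mp hj)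
        rw [this, zero_mul]
      · have hmem := Finset.HasAntidiagonal.mem_antidiagonal.mp hp
        have hdeg : p.1.degree + p.2.degree = e.degree := by rw [← degree_add', hmem]
        have h1 : p.1.degree ≠ 0 := fun hc => h (Finsupp.degree_eq_zero_iff _ |>.mp hc)
        rw [ih p.2.degree (by omega) p.2 rfl (n + d - j), mul_zero]
  ext n e
  rw [map_zero, MvPowerSeries.coeff_zero]
  exact key e.degree e rfl n

/-- Core recursive definition of the coefficients of the quotient. -/
noncomputable def wQ (P : Polynomial (MvPowerSeries (Fin m) K)) (d : ℕ)
    (f : PowerSeries (MvPowerSeries (Fin m) K)) :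
    (Fin m →₀ ℕ) → ℕ → K
  | e, n =>
    MvPowerSeries.coeff e (PowerSeries.coeff (n + d) f) +
    ∑ j ∈ Finset.range d,
      ∑ p ∈ (Finset.HasAntidiagonal.antidiagonal e).attach,
        if h : p.1.1 = 0 then 0 else
          MvPowerSeries.coeff p.1.1 (P.coeff j) * wQ P d f p.1.2 (n + d - j)
  termination_by e n => e.degree
  decreasing_by
    have hmem := Finset.HasAntidiagonal.mem_antidiagonal.mp p.2
    have hdeg : p.1.1.degree + p.1.2.degree = e.degree := by rw [← degree_add', hmem]
    have h1 : p.1.1.degree ≠ 0 := fun hc => h (Finsupp.degree_eq_zero_iff _ |>.mp hc)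
    omega

/-- The quotient power series. -/
noncomputable def wq (P : Polynomial (MvPowerSeries (Fin m) K)) (d : ℕ)
    (f : PowerSeries (MvPowerSeries (Fin m) K)) :
    PowerSeries (MvPowerSeries (Fin m) K) :=
  PowerSeries.mk fun n => (fun e => wQ P d f e n : MvPowerSeries (Fin m) K)

lemma coeff_wq (P : Polynomial (MvPowerSeries (Fin m) K)) (d : ℕ)
    (f : PowerSeries (MvPowerSeries (Fin m) K)) (n : ℕ) (e : Fin m →₀ ℕ) :
    MvPowerSeries.coeff e (PowerSeries.coeff n (wq P d f)) = wQ P d f e n := by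
  rw [wq]; erw [PowerSeries.coeff_mk]

/-- The defining equation of the quotient. -/
lemma wq_spec (P : Polynomial (MvPowerSeries (Fin m) K)) (d : ℕ)
    (hP0 : ∀ j < d, MvPowerSeries.constantCoeff (P.coeff j) = 0)
    (hPtop : ∀ j, d ≤ j → P.coeff j = 0)
    (f : PowerSeries (MvPowerSeries (Fin m) K)) (n : ℕ) :
    PowerSeries.coeff n (wq P d f) = PowerSeries.coeff (n + d) f +
      PowerSeries.coeff (n + d)
        (wq P d f * (P : PowerSeries (MvPowerSeries (Fin m) K))) := by
  apply MvPowerSeries.ext fun e => ?_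
  rw [map_add, coeff_wq, step2 P d hPtop _ n e, wQ]
  congr 1
  refine Finset.sum_congr rfl fun j hj => ?_
  rw [← Finset.sum_attach (Finset.HasAntidiagonal.antidiagonal e)
    (fun p => MvPowerSeries.coeff p.1 (P.coeff j) *
      MvPowerSeries.coeff p.2 (PowerSeries.coeff (n + d - j) (wq P d f)))]
  refine Finset.sum_congr rfl fun p _ => ?_
  rcases eq_or_ne p.1.1 0 with h | h
  · have h0 : MvPowerSeries.coeff (0 : Fin m →₀ ℕ) (P.coeff j) = 0 :=
      hP0 j (Finset.mem_range.mp hj)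
    rw [dif_pos h, h, h0, zero_mul]
  · rw [dif_neg h, coeff_wq]

end WDiv


/-- formal Weierstraß division: with `R' = K[[x₁,…,x_{n−1}]]` and
`R = R'[[y]]`, if `g ∈ R'[y]` is a Weierstraß polynomial of degree `d` (monic of
degree `d` with nonleading coefficients vanishing at `0`), then every `f ∈ R` has a
unique decomposition `f = q·g + r` with `q ∈ R` and `r ∈ R'[y]` of degree `< d`.
In particular every `f` is congruent mod `(g)` to a unique polynomial of degree
`< d`, i.e. `R/(g)` is free over `R'` with basis `1, y, …, y^{d−1}`. -/
theorem weierstrass_division_formal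
    (K : Type*) [Field K] (m : ℕ)
    (g : Polynomial (MvPowerSeries (Fin m) K)) (d : ℕ)
    (hmonic : g.Monic) (hdeg : g.natDegree = d)
    (hcoeff : ∀ i < d, MvPowerSeries.constantCoeff (g.coeff i) = 0)
    (f : PowerSeries (MvPowerSeries (Fin m) K)) :
    (∃! qr : PowerSeries (MvPowerSeries (Fin m) K) × Polynomial (MvPowerSeries (Fin m) K),
        qr.2.degree < (d : WithBot ℕ) ∧
        f = qr.1 * (g : PowerSeries (MvPowerSeries (Fin m) K)) +
          (qr.2 : PowerSeries (MvPowerSeries (Fin m) K))) ∧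
    (∃! r : Polynomial (MvPowerSeries (Fin m) K),
        r.degree < (d : WithBot ℕ) ∧
        f - (r : PowerSeries (MvPowerSeries (Fin m) K)) ∈
          Ideal.span {(g : PowerSeries (MvPowerSeries (Fin m) K))}) := by
  classical
  set P : Polynomial (MvPowerSeries (Fin m) K) := Polynomial.X ^ d - g with hP
  have hP0 : ∀ j < d, MvPowerSeries.constantCoeff (P.coeff j) = 0 := by
    intro j hj
    rw [hP, Polynomial.coeff_sub, Polynomial.coeff_X_pow, if_neg (by omega), map_sub,
      hcoeff j hj, map_zero, sub_zero]
  have hPtop : ∀ j, d ≤ j → P.coeff j = 0 := by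
    intro j hj
    rcases eq_or_lt_of_le hj with h | h
    · rw [hP, Polynomial.coeff_sub, Polynomial.coeff_X_pow, if_pos h.symm, ← h, ← hdeg,
        hmonic.coeff_natDegree, sub_self]
    · rw [hP, Polynomial.coeff_sub, Polynomial.coeff_X_pow, if_neg (by omega),
        Polynomial.coeff_eq_zero_of_natDegree_lt (by omega : g.natDegree < j), sub_self]
  have hg : (g : PowerSeries (MvPowerSeries (Fin m) K)) =
      (PowerSeries.X : PowerSeries (MvPowerSeries (Fin m) K)) ^ d - (P : PowerSeries _) := by
    have : g = Polynomial.X ^ d - P := by rw [hP]; ring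
    rw [this, Polynomial.coe_sub, Polynomial.coe_pow, Polynomial.coe_X]
  -- decomposition of coefficients of u * g
  have dec : ∀ (u : PowerSeries (MvPowerSeries (Fin m) K)) (n : ℕ),
      PowerSeries.coeff (n + d) (u * (g : PowerSeries _)) =
        PowerSeries.coeff n u - PowerSeries.coeff (n + d) (u * (P : PowerSeries _)) := by
    intro u n
    rw [hg, mul_sub, map_sub, PowerSeries.coeff_mul_X_pow]
  set q := WDiv.wq P d f with hq
  have hspec := WDiv.wq_spec P d hP0 hPtop f
  have hcoeffzero : ∀ n, PowerSeries.coeff (n + d) (f - q * (g : PowerSeries _)) = 0 := by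
    intro n
    rw [map_sub, dec q n, hspec n]
    ring
  set r : Polynomial (MvPowerSeries (Fin m) K) :=
    PowerSeries.trunc d (f - q * (g : PowerSeries _)) with hr
  have hrdeg : r.degree < (d : WithBot ℕ) := PowerSeries.degree_trunc_lt _ d
  have hrcoe : (r : PowerSeries (MvPowerSeries (Fin m) K)) = f - q * (g : PowerSeries _) := by
    ext k
    rw [Polynomial.coeff_coe, hr, PowerSeries.coeff_trunc]
    by_cases hk : k < d
    · rw [if_pos hk]
    · rw [if_neg hk]
      have : k = (k - d) + d := by omega
      rw [this, hcoeffzero (k - d)]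
  have hfeq : f = q * (g : PowerSeries _) + (r : PowerSeries _) := by
    rw [hrcoe]; ring
  -- uniqueness of pairs
  have huniq : ∀ qr : PowerSeries (MvPowerSeries (Fin m) K) × Polynomial (MvPowerSeries (Fin m) K),
      (qr.2.degree < (d : WithBot ℕ) ∧
        f = qr.1 * (g : PowerSeries _) + (qr.2 : PowerSeries _)) → qr = (q, r) := by
    rintro ⟨q', r'⟩ ⟨hdeg', heq'⟩
    have hsub : (q' - q) * (g : PowerSeries _) = ((r - r' : Polynomial _) : PowerSeries _) := by
      rw [Polynomial.coe_sub, sub_mul]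
      have := heq'.symm.trans hfeq
      -- q' * g + r' = q * g + r  (as `f = ...` twice)
      rw [heq'] at hfeq
      linear_combination hfeq
    have hdrr : (r - r' : Polynomial _).degree < (d : WithBot ℕ) :=
      lt_of_le_of_lt (Polynomial.degree_sub_le _ _) (max_lt hrdeg hdeg')
    have hu : q' - q = 0 := by
      apply WDiv.uniq_core P d hP0 hPtop
      intro n
      have h1 := dec (q' - q) n
      rw [hsub, Polynomial.coeff_coe,
        Polynomial.coeff_eq_zero_of_degree_lt
          (lt_of_lt_of_le hdrr (by exact_mod_cast Nat.le_add_left d n))] at h1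
      linear_combination -h1
    have hq' : q' = q := by rwa [sub_eq_zero] at hu
    have hr' : r' = r := by
      rw [hu, zero_mul] at hsub
      have := hsub.symm
      rw [Polynomial.coe_eq_zero_iff] at this
      exact (sub_eq_zero.mp this).symm
    exact Prod.ext hq' hr'
  have part1 : ∃! qr : PowerSeries (MvPowerSeries (Fin m) K) ×
      Polynomial (MvPowerSeries (Fin m) K),
      qr.2.degree < (d : WithBot ℕ) ∧
      f = qr.1 * (g : PowerSeries _) + (qr.2 : PowerSeries _) :=
    ⟨(q, r), ⟨hrdeg, hfeq⟩, huniq⟩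
  refine ⟨part1, ⟨r, ⟨hrdeg, ?_⟩, ?_⟩⟩
  · rw [hfeq]
    have : q * (g : PowerSeries _) + (r : PowerSeries _) - (r : PowerSeries _)
        = q * (g : PowerSeries _) := by ring
    rw [this]
    exact Ideal.mem_span_singleton.mpr (dvd_mul_left _ _)
  · rintro r₁ ⟨hd₁, hm₁⟩
    obtain ⟨c, hc⟩ := Ideal.mem_span_singleton.mp hm₁
    have : f = c * (g : PowerSeries _) + (r₁ : PowerSeries _) := by
      rw [mul_comm] at hc
      linear_combination hc
    have := huniq (c, r₁) ⟨hd₁, this⟩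
    exact congrArg Prod.snd this
end
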